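/- arXiv:2201.01766 — 3 statements merged into one kernel-verified Lean document; each statement's English description precedes it below -/
import Mathlib

section
/- Let 0<N₇<1 and 0<τ<1. Suppose J:(0,1/4]→[0,∞) is nondecreasing and satisfies J(R/4) ≤ (1 − (N₇/4)·(ln(100/R))^{τ−1})·J(R) for all 0<R≤1/4. Then for all 0<ρ<R≤1/4, J(ρ) ≤ exp(−(N₇/(4τ·ln 4))·((ln(100/ρ))^τ − (ln(100/R))^τ − 2))·J(R). -/
open Real Set

private lemma bern_aux {L δ τ : ℝ} (hL : 1 ≤ L) (hδ : 0 ≤ δ) (hτ : 0 ≤ τ) (hτ' : τ ≤ 1) :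
    (L + δ) ^ τ ≤ L ^ τ + τ * δ * L ^ (τ - 1) := by
  have hL0 : 0 < L := lt_of_lt_of_le one_pos hL
  have hs : -1 ≤ δ / L := le_trans (by norm_num) (div_nonneg hδ hL0.le)
  have h1 : (1 + δ / L) ^ τ ≤ 1 + τ * (δ / L) :=
    rpow_one_add_le_one_add_mul_self hs hτ hτ'
  have h2 : (L + δ) ^ τ = L ^ τ * (1 + δ / L) ^ τ := by
    rw [← Real.mul_rpow hL0.le (by positivity)]
    congr 1
    field_simp
  rw [h2]
  have h3 : L ^ τ * (1 + δ / L) ^ τ ≤ L ^ τ * (1 + τ * (δ / L)) :=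
    mul_le_mul_of_nonneg_left h1 (Real.rpow_nonneg hL0.le τ)
  refine h3.trans (le_of_eq ?_)
  have h4 : L ^ (τ - 1) = L ^ τ / L := by
    rw [Real.rpow_sub hL0, Real.rpow_one]
  rw [h4]
  field_simp

/-- elementary iteration lemma. -/
theorem iteration_lemma (N₇ τ : ℝ) (hN₇ : 0 < N₇) (hN₇' : N₇ < 1)
    (hτ : 0 < τ) (hτ' : τ < 1)
    (J : ℝ → ℝ)
    (hJnonneg : ∀ R ∈ Ioc (0:ℝ) (1/4), 0 ≤ J R)
    (hJmono : ∀ R₁ ∈ Ioc (0:ℝ) (1/4), ∀ R₂ ∈ Ioc (0:ℝ) (1/4), R₁ ≤ R₂ → J R₁ ≤ J R₂)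
    (hiter : ∀ R ∈ Ioc (0:ℝ) (1/4),
      J (R/4) ≤ (1 - N₇/4 * (Real.log (100/R)) ^ (τ - 1)) * J R) :
    ∀ ρ R : ℝ, 0 < ρ → ρ < R → R ≤ 1/4 →
      J ρ ≤ Real.exp (-(N₇ / (4 * τ * Real.log 4)) *
          ((Real.log (100/ρ)) ^ τ - (Real.log (100/R)) ^ τ - 2)) * J R := by
  intro ρ R hρ hρR hR
  have hR0 : 0 < R := hρ.trans hρR
  have hJR : 0 ≤ J R := hJnonneg R ⟨hR0, hR⟩
  have hlog4 : (0:ℝ) < Real.log 4 := Real.log_pos (by norm_num)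
  have hlog4' : Real.log 4 < 2 := by
    have h2 : Real.log 4 = 2 * Real.log 2 := by
      rw [show (4:ℝ) = 2^2 by norm_num, Real.log_pow]
      push_cast; ring
    have := Real.log_two_lt_d9
    rw [h2]; linarith
  set c : ℝ := N₇ / (4 * τ * Real.log 4) with hc
  have hc0 : 0 < c := by positivity
  -- basic fact: for r in Ioc 0 (1/4), log(100/r) ≥ 1
  have hLbig : ∀ r : ℝ, 0 < r → r ≤ 1/4 → 1 ≤ Real.log (100/r) := by
    intro r hr hr'
    have h1 : (Real.exp 1) ≤ 100 / r := by
      have h400 : (400:ℝ) ≤ 100/r := by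
        rw [le_div_iff₀ hr]; linarith
      have he : Real.exp 1 < 400 := by
        have := Real.exp_one_lt_d9
        linarith
      linarith
    calc (1:ℝ) = Real.log (Real.exp 1) := by rw [Real.log_exp]
    _ ≤ Real.log (100/r) := Real.log_le_log (Real.exp_pos 1) h1
  -- membership
  have hmem : ∀ n : ℕ, R / 4^n ∈ Ioc (0:ℝ) (1/4) := by
    intro n
    refine ⟨by positivity, ?_⟩
    calc R / 4^n ≤ R / 1 := by
          apply div_le_div_of_nonneg_left hR0.le one_pos
          exact one_le_pow₀ (by norm_num)
    _ = R := div_one R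
    _ ≤ 1/4 := hR
  -- log formula
  have hLn : ∀ n : ℕ, Real.log (100 / (R / 4^n)) = Real.log (100/R) + n * Real.log 4 := by
    intro n
    have h4 : (4:ℝ)^n ≠ 0 := by positivity
    have heq : (100:ℝ) / (R / 4^n) = (100/R) * 4^n := by field_simp
    rw [heq, Real.log_mul (by positivity) h4, Real.log_pow]
  -- key induction
  have main : ∀ n : ℕ, J (R / 4^n) ≤
      Real.exp (-c * ((Real.log (100/(R/4^n)))^τ - (Real.log (100/R))^τ)) * J R := by
    intro n
    induction n with
    | zero => simp
    | succ n ih =>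
      have hRn := hmem n
      have hL1 : 1 ≤ Real.log (100 / (R / 4^n)) := hLbig _ hRn.1 hRn.2
      set L : ℝ := Real.log (100 / (R / 4^n)) with hLdef
      have hL0 : (0:ℝ) < L := lt_of_lt_of_le one_pos hL1
      have hstep := hiter _ hRn
      have hEq : R / 4^(n+1) = (R / 4^n) / 4 := by
        rw [pow_succ]; ring
      have hL' : Real.log (100 / (R / 4^(n+1))) = L + Real.log 4 := by
        rw [hLn (n+1), hLdef, hLn n]
        push_cast
        ring
      -- 1 - x ≤ exp(-x)
      have hx : (1 - N₇/4 * L ^ (τ - 1)) ≤ Real.exp (-(N₇/4 * L ^ (τ - 1))) := by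
        have := Real.add_one_le_exp (-(N₇/4 * L ^ (τ - 1)))
        linarith
      have hJn : 0 ≤ J (R / 4^n) := hJnonneg _ hRn
      have h1 : J (R / 4^(n+1)) ≤ Real.exp (-(N₇/4 * L ^ (τ - 1))) * J (R / 4^n) := by
        rw [hEq]
        exact hstep.trans (mul_le_mul_of_nonneg_right hx hJn)
      have h2 : J (R / 4^(n+1)) ≤ Real.exp (-(N₇/4 * L ^ (τ - 1))) *
          (Real.exp (-c * (L^τ - (Real.log (100/R))^τ)) * J R) :=
        h1.trans (mul_le_mul_of_nonneg_left ih (Real.exp_nonneg _))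
      rw [← mul_assoc, ← Real.exp_add] at h2
      refine h2.trans (mul_le_mul_of_nonneg_right ?_ hJR)
      rw [Real.exp_le_exp, hL']
      -- need: -(N₇/4 * L^(τ-1)) + -c*(L^τ - L₀^τ) ≤ -c*((L+log4)^τ - L₀^τ)
      -- i.e. c*((L+log4)^τ - L^τ) ≤ N₇/4 * L^(τ-1)
      have hb : (L + Real.log 4)^τ ≤ L^τ + τ * Real.log 4 * L^(τ-1) :=
        bern_aux hL1 hlog4.le hτ.le hτ'.le
      have hkey : c * ((L + Real.log 4)^τ - L^τ) ≤ N₇/4 * L^(τ-1) := by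
        have h5 : c * ((L + Real.log 4)^τ - L^τ) ≤ c * (τ * Real.log 4 * L^(τ-1)) := by
          apply mul_le_mul_of_nonneg_left _ hc0.le
          linarith
        refine h5.trans (le_of_eq ?_)
        rw [hc]
        field_simp
      linarith
  -- choose n with 4^n ≤ R/ρ < 4^(n+1)
  have hRρ : (1:ℝ) < R / ρ := (one_lt_div hρ).mpr hρR
  set n : ℕ := ⌊Real.logb 4 (R/ρ)⌋₊ with hn
  have hlogb0 : 0 ≤ Real.logb 4 (R/ρ) := Real.logb_nonneg (by norm_num) hRρ.le
  have hpow : (4:ℝ) ^ (Real.logb 4 (R/ρ)) = R/ρ := Real.rpow_logb (by norm_num) (by norm_num) (by positivity)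
  have h4n : (4:ℝ)^n ≤ R/ρ := by
    calc ((4:ℝ)^n) = (4:ℝ) ^ ((n:ℝ)) := by rw [Real.rpow_natCast]
    _ ≤ (4:ℝ) ^ (Real.logb 4 (R/ρ)) :=
        Real.rpow_le_rpow_of_exponent_le (by norm_num) (Nat.floor_le hlogb0)
    _ = R/ρ := hpow
  have h4n' : R/ρ < (4:ℝ)^(n+1) := by
    calc R/ρ = (4:ℝ) ^ (Real.logb 4 (R/ρ)) := hpow.symm
    _ < (4:ℝ) ^ (((n:ℝ)+1)) := by
        apply Real.rpow_lt_rpow_of_exponent_lt (by norm_num)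
        have := Nat.lt_floor_add_one (Real.logb 4 (R/ρ))
        push_cast
        linarith
    _ = (4:ℝ)^(n+1) := by
        rw [← Real.rpow_natCast 4 (n+1)]
        norm_num
  have hρle : ρ ≤ R / 4^n := by
    rw [le_div_iff₀ (by positivity)]
    rw [le_div_iff₀ hρ] at h4n
    linarith
  have hρgt : R / 4^(n+1) < ρ := by
    rw [div_lt_iff₀ (by positivity)]
    rw [div_lt_iff₀ hρ] at h4n'
    linarith
  have hρmem : ρ ∈ Ioc (0:ℝ) (1/4) := ⟨hρ, le_trans (le_of_lt hρR) hR⟩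
  have hmono := hJmono ρ hρmem (R/4^n) (hmem n) hρle
  refine (hmono.trans (main n)).trans (mul_le_mul_of_nonneg_right ?_ hJR)
  rw [Real.exp_le_exp]
  -- need exponent comparison: -c*(L_n^τ - L₀^τ) ≤ -c*(L(ρ)^τ - L₀^τ - 2)
  -- i.e. L(ρ)^τ ≤ L_n^τ + 2
  have hRn := hmem n
  have hL1 : 1 ≤ Real.log (100 / (R / 4^n)) := hLbig _ hRn.1 hRn.2
  set L : ℝ := Real.log (100 / (R / 4^n)) with hLdef
  have hLρ1 : 1 ≤ Real.log (100/ρ) := hLbig ρ hρ hρmem.2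
  have hLρlt : Real.log (100/ρ) ≤ L + Real.log 4 := by
    have h1 : Real.log (100/ρ) ≤ Real.log (100 / (R/4^(n+1))) := by
      apply Real.log_le_log (by positivity)
      apply div_le_div_of_nonneg_left (by norm_num) (by positivity) hρgt.le
    have h2 : Real.log (100 / (R / 4^(n+1))) = L + Real.log 4 := by
      rw [hLn (n+1), hLdef, hLn n]
      push_cast
      ring
    linarith
  have hkey : (Real.log (100/ρ))^τ ≤ L^τ + 2 := by
    have hb : (L + Real.log 4)^τ ≤ L^τ + τ * Real.log 4 * L^(τ-1) :=
      bern_aux hL1 hlog4.le hτ.le hτ'.le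
    have hmon : (Real.log (100/ρ))^τ ≤ (L + Real.log 4)^τ :=
      Real.rpow_le_rpow (by linarith) hLρlt hτ.le
    have hLpow : L^(τ-1) ≤ 1 := by
      apply Real.rpow_le_one_of_one_le_of_nonpos hL1
      linarith
    have h6 : τ * Real.log 4 * L^(τ-1) ≤ τ * Real.log 4 := by
      nth_rewrite 2 [← mul_one (τ * Real.log 4)]
      apply mul_le_mul_of_nonneg_left hLpow (by positivity)
    have h7 : τ * Real.log 4 ≤ 2 := by nlinarith
    linarith
  have hcineq : c * ((Real.log (100/ρ))^τ - 2) ≤ c * L^τ := by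
    apply mul_le_mul_of_nonneg_left _ hc0.le
    linarith
  nlinarith [hcineq]
end

section
/- Let (X,μ) be a probability space, let M≥1, and let f:X→ℝ be measurable with 0<f≤M almost everywhere, with ∫f dμ>0 and with ln f ∈ L²(μ). Set ḡ=∫ ln f dμ and g=ln f − ḡ. Then |ln(∫f dμ) − ḡ| ≤ M·‖g‖_{L²(μ)} / ∫f dμ. -/
open MeasureTheory

/-- Nash-type logarithmic inequality on a probability space. -/
theorem nash_inequality {X : Type*} [MeasurableSpace X] (μ : Measure X)
    [IsProbabilityMeasure μ] (M : ℝ) (hM : 1 ≤ M) (f : X → ℝ)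
    (hmeas : Measurable f)
    (hbdd : ∀ᵐ x ∂μ, 0 < f x ∧ f x ≤ M)
    (hpos : 0 < ∫ x, f x ∂μ)
    (hlog : MemLp (fun x => Real.log (f x)) 2 μ) :
    |Real.log (∫ x, f x ∂μ) - ∫ x, Real.log (f x) ∂μ| ≤
      M * (∫ x, (Real.log (f x) - ∫ y, Real.log (f y) ∂μ) ^ 2 ∂μ) ^ ((1:ℝ)/2)
        / ∫ x, f x ∂μ := by
  have hf_int : Integrable f μ := by
    refine Integrable.mono' (integrable_const M) hmeas.aestronglyMeasurable ?_
    filter_upwards [hbdd] with x hx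
    rw [Real.norm_eq_abs, abs_of_pos hx.1]; exact hx.2
  set I := ∫ x, f x ∂μ with hIdef
  set G := ∫ x, Real.log (f x) ∂μ with hGdef
  have hlog_int : Integrable (fun x => Real.log (f x)) μ := hlog.integrable one_le_two
  have hg2 : MemLp (fun x => Real.log (f x) - G) 2 μ := hlog.sub (memLp_const G)
  have hg_int : Integrable (fun x => Real.log (f x) - G) μ :=
    hlog_int.sub (integrable_const G)
  -- Step A: G ≤ log I
  have hA : G ≤ Real.log I := by
    have h1 : ∀ᵐ x ∂μ, Real.log (f x) ≤ f x / I + (Real.log I - 1) := by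
      filter_upwards [hbdd] with x hx
      have h2 := Real.log_le_sub_one_of_pos (div_pos hx.1 hpos)
      rw [Real.log_div (ne_of_gt hx.1) (ne_of_gt hpos)] at h2
      linarith
    have h3 : G ≤ ∫ x, (f x / I + (Real.log I - 1)) ∂μ :=
      integral_mono_ae hlog_int ((hf_int.div_const I).add (integrable_const _)) h1
    rwa [integral_add (hf_int.div_const I) (integrable_const _), integral_div,
      integral_const, probReal_univ, one_smul, ← hIdef,
      div_self (ne_of_gt hpos), show 1 + (Real.log I - 1) = Real.log I by ring] at h3
  -- integrability of products with f
  have hflog_int : Integrable (fun x => f x * Real.log (f x)) μ := by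
    refine hlog_int.bdd_mul (c := M) hmeas.aestronglyMeasurable ?_
    filter_upwards [hbdd] with x hx
    rw [Real.norm_eq_abs, abs_of_pos hx.1]; exact hx.2
  have hfg_int : Integrable (fun x => f x * (Real.log (f x) - G)) μ := by
    refine hg_int.bdd_mul (c := M) hmeas.aestronglyMeasurable ?_
    filter_upwards [hbdd] with x hx
    rw [Real.norm_eq_abs, abs_of_pos hx.1]; exact hx.2
  -- Step B : I * (log I - G) ≤ ∫ f * g
  have hB : I * (Real.log I - G) ≤ ∫ x, f x * (Real.log (f x) - G) ∂μ := by
    have h1 : ∀ᵐ x ∂μ, f x * Real.log I + f x - I ≤ f x * Real.log (f x) := by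
      filter_upwards [hbdd] with x hx
      have h2 := Real.log_le_sub_one_of_pos (div_pos hpos hx.1)
      rw [Real.log_div (ne_of_gt hpos) (ne_of_gt hx.1)] at h2
      have h3 : f x * (Real.log I - Real.log (f x)) ≤ f x * (I / f x - 1) :=
        mul_le_mul_of_nonneg_left h2 hx.1.le
      have h4 : f x * (I / f x - 1) = I - f x := by field_simp [hx.1.ne']
      rw [h4, mul_sub] at h3
      linarith
    have haux : Integrable (fun x => f x * Real.log I + f x) μ := by
      exact (hf_int.mul_const _).add hf_int
    have haux2 : Integrable (fun x => f x * Real.log I + f x - I) μ := by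
      exact haux.sub (integrable_const I)
    have h4 : ∫ x, (f x * Real.log I + f x - I) ∂μ ≤ ∫ x, f x * Real.log (f x) ∂μ :=
      integral_mono_ae haux2 hflog_int h1
    have h5 : ∫ x, (f x * Real.log I + f x - I) ∂μ = I * Real.log I := by
      rw [integral_sub haux (integrable_const I),
        integral_add (hf_int.mul_const _) hf_int, integral_mul_const,
        integral_const, probReal_univ, one_smul, ← hIdef]
      ring
    have h6 : ∫ x, f x * (Real.log (f x) - G) ∂μ
        = (∫ x, f x * Real.log (f x) ∂μ) - G * I := by
      have : ∀ x, f x * (Real.log (f x) - G) = f x * Real.log (f x) - G * f x := by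
        intro x; ring
      simp_rw [this]
      rw [integral_sub hflog_int (hf_int.const_mul G), integral_const_mul, ← hIdef]
    rw [h6]
    nlinarith [h4, h5]
  -- Step C : ∫ f * g ≤ M * ∫ |g|
  have hC : ∫ x, f x * (Real.log (f x) - G) ∂μ ≤ M * ∫ x, |Real.log (f x) - G| ∂μ := by
    rw [← integral_const_mul]
    refine integral_mono_ae hfg_int (hg_int.abs.const_mul M) ?_
    filter_upwards [hbdd] with x hx
    calc f x * (Real.log (f x) - G) ≤ f x * |Real.log (f x) - G| :=
          mul_le_mul_of_nonneg_left (le_abs_self _) hx.1.le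
      _ ≤ M * |Real.log (f x) - G| :=
          mul_le_mul_of_nonneg_right (le_trans hx.2 le_rfl) (abs_nonneg _)
  -- Step D : ∫ |g| ≤ (∫ g²)^(1/2)
  have hD : ∫ x, |Real.log (f x) - G| ∂μ
      ≤ (∫ x, (Real.log (f x) - G) ^ 2 ∂μ) ^ ((1:ℝ)/2) := by
    have hpq : Real.HolderConjugate 2 2 := ⟨by norm_num, by norm_num, by norm_num⟩
    have habs : MemLp (fun x => |Real.log (f x) - G|) (ENNReal.ofReal 2) μ := by
      simpa [← Real.norm_eq_abs, show ENNReal.ofReal 2 = 2 by norm_num] using hg2.norm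
    have hone : MemLp (fun _ : X => (1:ℝ)) (ENNReal.ofReal 2) μ := memLp_const 1
    have h := integral_mul_le_Lp_mul_Lq_of_nonneg hpq
      (Filter.Eventually.of_forall fun x => abs_nonneg (Real.log (f x) - G))
      (Filter.Eventually.of_forall fun _ => zero_le_one) habs hone
    simp only [mul_one, Real.one_rpow, integral_const, probReal_univ, one_smul] at h
    calc ∫ x, |Real.log (f x) - G| ∂μ
        ≤ (∫ x, |Real.log (f x) - G| ^ (2:ℝ) ∂μ) ^ (1/(2:ℝ)) := by
          simpa using h
      _ = (∫ x, (Real.log (f x) - G) ^ 2 ∂μ) ^ ((1:ℝ)/2) := by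
          congr 1
          refine integral_congr_ae (Filter.Eventually.of_forall fun x => ?_)
          show |Real.log (f x) - G| ^ (2:ℝ) = (Real.log (f x) - G) ^ 2
          rw [Real.rpow_two, sq_abs]
  -- assemble
  have hN : 0 ≤ (∫ x, (Real.log (f x) - G) ^ 2 ∂μ) ^ ((1:ℝ)/2) :=
    Real.rpow_nonneg (integral_nonneg fun x => sq_nonneg _) _
  rw [abs_of_nonneg (sub_nonneg.mpr hA), le_div_iff₀ hpos]
  calc (Real.log I - G) * I = I * (Real.log I - G) := by ring
    _ ≤ ∫ x, f x * (Real.log (f x) - G) ∂μ := hB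
    _ ≤ M * ∫ x, |Real.log (f x) - G| ∂μ := hC
    _ ≤ M * (∫ x, (Real.log (f x) - G) ^ 2 ∂μ) ^ ((1:ℝ)/2) :=
        mul_le_mul_of_nonneg_left hD (le_trans zero_le_one hM)
end

section
/- Let 1≤p<∞ and R>0. Let λ:[0,1)→[0,1] be nonincreasing, set Λ(x)=λ(|x|) for x in the unit ball B(1)⊂ℝ³, and assume ∫_{B(1)}Λ dx=1; define Λ_R(x)=R^{−3}Λ(x/R) for x∈B(R). Then for every continuously differentiable function f on the closed ball of radius R, ∫_{B(R)} | f(x) − ∫_{B(R)} f(y)Λ_R(y) dy |^p · Λ_R(x) dx ≤ 2^{p+6}·R^p·∫_{B(R)} |∇f(x)|^p · Λ_R(x) dx. -/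
open Real MeasureTheory Set
noncomputable section

abbrev E3 := EuclideanSpace ℝ (Fin 3)

/-- Jensen's inequality for `rpow` over a probability measure. -/
lemma jensen_rpow {α : Type*} [MeasurableSpace α] (μ : Measure α) [IsProbabilityMeasure μ]
    {h : α → ℝ} {p C : ℝ} (hp : 1 ≤ p) (hm : AEStronglyMeasurable h μ)
    (h0 : ∀ᵐ a ∂μ, 0 ≤ h a) (hC : ∀ᵐ a ∂μ, h a ≤ C) :
    (∫ a, h a ∂μ) ^ p ≤ ∫ a, h a ^ p ∂μ := by
  have hp0 : (0:ℝ) ≤ p := le_trans zero_le_one hp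
  have hint : Integrable h μ := by
    refine Integrable.mono' (integrable_const (max C 0)) hm ?_
    filter_upwards [h0, hC] with a ha hb
    rw [Real.norm_of_nonneg ha]
    exact le_max_of_le_left hb
  have hint2 : Integrable (fun a => h a ^ p) μ := by
    refine Integrable.mono' (integrable_const (max C 0 ^ p)) ?_ ?_
    · exact (Real.continuous_rpow_const hp0).comp_aestronglyMeasurable hm
    · filter_upwards [h0, hC] with a ha hb
      rw [Real.norm_of_nonneg (Real.rpow_nonneg ha p)]
      exact Real.rpow_le_rpow ha (le_max_of_le_left hb) hp0
  have := ConvexOn.map_integral_le (μ := μ) (convexOn_rpow hp)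
    ((Real.continuous_rpow_const hp0).continuousOn) isClosed_Ici
    (h0.mono fun a ha => ha) hint hint2
  exact this

set_option maxHeartbeats 2000000 in
/-- weighted Poincaré inequality on `B(R) ⊂ ℝ³` with a radially
nonincreasing probability weight. -/
theorem weighted_poincare (p : ℝ) (hp : 1 ≤ p) (R : ℝ) (hR : 0 < R)
    (lam : ℝ → ℝ)
    (hmono : ∀ s₁ ∈ Ico (0:ℝ) 1, ∀ s₂ ∈ Ico (0:ℝ) 1, s₁ ≤ s₂ → lam s₂ ≤ lam s₁)
    (hrange : ∀ s ∈ Ico (0:ℝ) 1, lam s ∈ Icc (0:ℝ) 1)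
    (hnorm : (∫ x in Metric.ball (0:E3) 1, lam ‖x‖) = 1)
    (f : E3 → ℝ) (hf : ContDiffOn ℝ 1 f (Metric.closedBall (0:E3) R)) :
    (∫ x in Metric.ball (0:E3) R,
        |f x - ∫ y in Metric.ball (0:E3) R, f y * ((R ^ 3)⁻¹ * lam (‖y‖ / R))| ^ p
          * ((R ^ 3)⁻¹ * lam (‖x‖ / R)))
      ≤ 2 ^ (p + 6) * R ^ p *
        ∫ x in Metric.ball (0:E3) R,
          ‖fderivWithin ℝ f (Metric.closedBall (0:E3) R) x‖ ^ p
            * ((R ^ 3)⁻¹ * lam (‖x‖ / R)) := by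
  classical
  have hp0 : (0:ℝ) ≤ p := le_trans zero_le_one hp
  have hR3 : (0:ℝ) < R ^ 3 := by positivity
  set B : Set E3 := Metric.ball (0:E3) R with hBdef
  set S : Set E3 := Metric.closedBall (0:E3) R with hSdef
  have hBmeas : MeasurableSet B := measurableSet_ball
  have hBS : B ⊆ S := Metric.ball_subset_closedBall
  have hScompact : IsCompact S := isCompact_closedBall _ _
  haveI : IsFiniteMeasure (volume.restrict B) :=
    ⟨by rw [Measure.restrict_apply_univ]; exact measure_ball_lt_top⟩
  -- the clamped weight
  set g : ℝ → ℝ := fun s => if s < 1 then lam (max s 0) else 0 with hgdef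
  have hg_eq : ∀ s ∈ Ico (0:ℝ) 1, g s = lam s := by
    intro s hs
    simp only [hgdef, if_pos hs.2, max_eq_left hs.1]
  have hg_mem : ∀ s, g s ∈ Icc (0:ℝ) 1 := by
    intro s
    by_cases h1 : s < 1
    · simp only [hgdef, if_pos h1]
      exact hrange _ ⟨le_max_right _ _, by rcases le_or_gt s 0 with h|h
                                           · simpa [max_eq_right h] using zero_lt_one
                                           · simpa [max_eq_left h.le] using h1⟩
    · simp only [hgdef, if_neg h1]
      exact ⟨le_rfl, zero_le_one⟩
  have hg_anti : Antitone g := by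
    intro s₁ s₂ hle
    by_cases h2 : s₂ < 1
    · have h1 : s₁ < 1 := lt_of_le_of_lt hle h2
      simp only [hgdef, if_pos h1, if_pos h2]
      refine hmono _ ⟨le_max_right _ _, ?_⟩ _ ⟨le_max_right _ _, ?_⟩ (max_le_max hle le_rfl)
      · rcases le_or_gt s₁ 0 with h|h
        · simpa [max_eq_right h] using zero_lt_one
        · simpa [max_eq_left h.le] using h1
      · rcases le_or_gt s₂ 0 with h|h
        · simpa [max_eq_right h] using zero_lt_one
        · simpa [max_eq_left h.le] using h2
    · simp only [hgdef, if_neg h2]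
      exact (hg_mem s₁).1
  have hg_meas : Measurable g := hg_anti.measurable
  set w : E3 → ℝ := fun x => (R ^ 3)⁻¹ * g (‖x‖ / R) with hwdef
  have hw_meas : Measurable w :=
    measurable_const.mul (hg_meas.comp (measurable_norm.div_const R))
  have hw_nonneg : ∀ x, 0 ≤ w x := fun x => by
    exact mul_nonneg (by positivity) (hg_mem _).1
  have hw_le : ∀ x, w x ≤ (R ^ 3)⁻¹ := fun x => by
    have := (hg_mem (‖x‖ / R)).2
    calc w x ≤ (R ^ 3)⁻¹ * 1 := by
          exact mul_le_mul_of_nonneg_left this (by positivity)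
      _ = (R ^ 3)⁻¹ := mul_one _
  have hmemIco : ∀ x ∈ B, ‖x‖ / R ∈ Ico (0:ℝ) 1 := by
    intro x hx
    have : ‖x‖ < R := by simpa [hBdef, Metric.mem_ball, dist_eq_norm] using hx
    exact ⟨div_nonneg (norm_nonneg _) hR.le, (div_lt_one hR).2 this⟩
  have hw_eq : ∀ x ∈ B, (R ^ 3)⁻¹ * lam (‖x‖ / R) = w x := by
    intro x hx
    rw [hwdef]
    simp only [hg_eq _ (hmemIco x hx)]
  -- the derivative and its norm
  set D : E3 → E3 →L[ℝ] ℝ := fderivWithin ℝ f S with hDdef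
  set G : E3 → ℝ := fun z => ‖D z‖ ^ p with hGdef
  have hGnn : ∀ z, 0 ≤ G z := fun z => Real.rpow_nonneg (norm_nonneg _) _
  have hUD : UniqueDiffOn ℝ S :=
    uniqueDiffOn_convex (convex_closedBall _ _)
      (by rw [hSdef, interior_closedBall _ hR.ne']; exact Metric.nonempty_ball.2 hR)
  have hDcont : ContinuousOn D S := hf.continuousOn_fderivWithin hUD le_rfl
  have hGcont : ContinuousOn G S :=
    (Real.continuous_rpow_const hp0).comp_continuousOn hDcont.norm
  have hfc : ContinuousOn f S := hf.continuousOn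
  obtain ⟨CD, hCD⟩ := hScompact.exists_bound_of_continuousOn hDcont
  have h0S : (0:E3) ∈ S := by simp [hSdef, hR.le]
  have hCD0 : 0 ≤ CD := le_trans (norm_nonneg _) (hCD 0 h0S)
  obtain ⟨M, hM⟩ := hScompact.exists_bound_of_continuousOn hfc
  have hGbound : ∀ z ∈ S, G z ≤ CD ^ p := by
    intro z hz
    exact Real.rpow_le_rpow (norm_nonneg _) (hCD z hz) hp0
  -- membership of segment points
  have hz_mem : ∀ x ∈ B, ∀ y ∈ B, ∀ t ∈ Icc (0:ℝ) 1, ((1-t) • x + t • y) ∈ B := by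
    intro x hx y hy t ht
    exact (convex_ball (0:E3) R) hx hy (by linarith [ht.2]) ht.1 (by ring)
  -- weight comparison along segments
  have hwz : ∀ x ∈ B, ∀ y ∈ B, ∀ t ∈ Icc (0:ℝ) 1,
      w x * w y ≤ (R ^ 3)⁻¹ * w ((1-t) • x + t • y) := by
    intro x hx y hy t ht
    have hn : ‖(1-t) • x + t • y‖ ≤ max ‖x‖ ‖y‖ := by
      calc ‖(1-t) • x + t • y‖ ≤ ‖(1-t) • x‖ + ‖t • y‖ := norm_add_le _ _
        _ = (1-t) * ‖x‖ + t * ‖y‖ := by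
            rw [norm_smul, norm_smul, Real.norm_of_nonneg (by linarith [ht.2]),
              Real.norm_of_nonneg ht.1]
        _ ≤ (1-t) * max ‖x‖ ‖y‖ + t * max ‖x‖ ‖y‖ :=
            add_le_add (mul_le_mul_of_nonneg_left (le_max_left _ _) (by linarith [ht.2]))
              (mul_le_mul_of_nonneg_left (le_max_right _ _) ht.1)
        _ = max ‖x‖ ‖y‖ := by ring
    have hkey : g (‖x‖ / R) * g (‖y‖ / R) ≤ g (‖(1-t) • x + t • y‖ / R) := by
      have h1 : g (‖(1-t) • x + t • y‖ / R) ≥ g (max ‖x‖ ‖y‖ / R) :=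
        hg_anti ((div_le_div_iff_of_pos_right hR).mpr hn)
      have h2 : g (max ‖x‖ ‖y‖ / R) = min (g (‖x‖ / R)) (g (‖y‖ / R)) := by
        rcases le_total ‖x‖ ‖y‖ with h|h
        · rw [max_eq_right h, min_eq_right (hg_anti ((div_le_div_iff_of_pos_right hR).mpr h))]
        · rw [max_eq_left h, min_eq_left (hg_anti ((div_le_div_iff_of_pos_right hR).mpr h))]
      have h3 : g (‖x‖ / R) * g (‖y‖ / R) ≤ min (g (‖x‖ / R)) (g (‖y‖ / R)) := by
        rcases le_total (g (‖x‖ / R)) (g (‖y‖ / R)) with h|h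
        · rw [min_eq_left h]
          calc g (‖x‖ / R) * g (‖y‖ / R) ≤ g (‖x‖ / R) * 1 :=
                mul_le_mul_of_nonneg_left (hg_mem _).2 (hg_mem _).1
            _ = g (‖x‖ / R) := mul_one _
        · rw [min_eq_right h]
          calc g (‖x‖ / R) * g (‖y‖ / R) ≤ 1 * g (‖y‖ / R) :=
                mul_le_mul_of_nonneg_right (hg_mem _).2 (hg_mem _).1
            _ = g (‖y‖ / R) := one_mul _
      exact le_trans h3 (h2 ▸ h1)
    calc w x * w y = (R ^ 3)⁻¹ * ((R ^ 3)⁻¹ * (g (‖x‖ / R) * g (‖y‖ / R))) := by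
          rw [hwdef]; ring
      _ ≤ (R ^ 3)⁻¹ * ((R ^ 3)⁻¹ * g (‖(1-t) • x + t • y‖ / R)) :=
          mul_le_mul_of_nonneg_left (mul_le_mul_of_nonneg_left hkey (by positivity))
            (by positivity)
      _ = (R ^ 3)⁻¹ * w ((1-t) • x + t • y) := by rw [hwdef]
  -- the weight is a probability density on B
  have hwint1 : (∫ x in B, w x) = 1 := by
    have hgball : (∫ u in Metric.ball (0:E3) 1, g ‖u‖) = 1 := by
      have heq : (∫ u in Metric.ball (0:E3) 1, g ‖u‖)
          = ∫ u in Metric.ball (0:E3) 1, lam ‖u‖ :=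
        setIntegral_congr_fun measurableSet_ball fun u hu =>
          hg_eq ‖u‖ ⟨norm_nonneg u, by simpa [Metric.mem_ball, dist_eq_norm] using hu⟩
      rw [heq, hnorm]
    set φ : E3 → ℝ := indicator (Metric.ball (0:E3) 1) (fun u => g ‖u‖) with hφdef
    have key : ∀ x : E3, φ (R⁻¹ • x) = indicator B (fun x => g (‖x‖ / R)) x := by
      intro x
      have hn : ‖R⁻¹ • x‖ = ‖x‖ / R := by
        rw [norm_smul, Real.norm_eq_abs, abs_inv, abs_of_pos hR]; ring
      by_cases hx : x ∈ B
      · have hmem : R⁻¹ • x ∈ Metric.ball (0:E3) 1 := by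
          simp only [Metric.mem_ball, dist_zero_right, hn]
          exact (div_lt_one hR).2 (by simpa [hBdef, Metric.mem_ball, dist_eq_norm] using hx)
        rw [hφdef, indicator_of_mem hmem, indicator_of_mem hx, hn]
      · have hmem : R⁻¹ • x ∉ Metric.ball (0:E3) 1 := by
          simp only [Metric.mem_ball, dist_zero_right, hn]
          intro hc
          exact hx (by simpa [hBdef, Metric.mem_ball, dist_eq_norm] using (div_lt_one hR).1 hc)
        rw [hφdef, indicator_of_notMem hmem, indicator_of_notMem hx]
    have h1 : (∫ x, φ (R⁻¹ • x)) = (R ^ 3 : ℝ) • ∫ x, φ x := by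
      have := MeasureTheory.Measure.integral_comp_inv_smul_of_nonneg (volume : Measure E3) φ hR.le
      simpa [finrank_euclideanSpace_fin] using this
    have h2 : (∫ x, φ (R⁻¹ • x)) = ∫ x in B, g (‖x‖ / R) := by
      rw [show (fun x => φ (R⁻¹ • x)) = indicator B (fun x => g (‖x‖ / R)) from funext key]
      exact integral_indicator hBmeas
    have h3 : (∫ x, φ x) = 1 := by
      rw [hφdef, integral_indicator measurableSet_ball, hgball]
    have h4 : (∫ x in B, g (‖x‖ / R)) = R ^ 3 := by
      rw [← h2, h1, h3, smul_eq_mul, mul_one]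
    calc (∫ x in B, w x) = (R ^ 3)⁻¹ * ∫ x in B, g (‖x‖ / R) := by
          rw [hwdef, integral_const_mul]
      _ = 1 := by rw [h4, inv_mul_cancel₀ hR3.ne']
  -- the weighted probability measure
  set ν : Measure E3 :=
    (volume.restrict B).withDensity (fun x => ((w x).toNNReal : ENNReal)) with hνdef
  have hconv : ∀ φ : E3 → ℝ, (∫ a, φ a ∂ν) = ∫ x in B, w x * φ x := by
    intro φ
    rw [hνdef, integral_withDensity_eq_integral_smul (hw_meas.real_toNNReal) φ]
    refine integral_congr_ae (Filter.Eventually.of_forall fun x => ?_)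
    simp [NNReal.smul_def, Real.coe_toNNReal _ (hw_nonneg x)]
  have hwIntB : Integrable w (volume.restrict B) := by
    refine Integrable.mono' (integrable_const ((R ^ 3)⁻¹)) hw_meas.aestronglyMeasurable ?_
    exact Filter.Eventually.of_forall fun x => by
      rw [Real.norm_of_nonneg (hw_nonneg x)]; exact hw_le x
  haveI hνprob : IsProbabilityMeasure ν := by
    constructor
    rw [hνdef, withDensity_apply _ MeasurableSet.univ, Measure.restrict_univ]
    have : ∫⁻ x, ENNReal.ofReal (w x) ∂(volume.restrict B) = ENNReal.ofReal (∫ x in B, w x) :=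
      (ofReal_integral_eq_lintegral_ofReal hwIntB
        (Filter.Eventually.of_forall hw_nonneg)).symm
    rw [show (fun x => ((w x).toNNReal : ENNReal)) = fun x => ENNReal.ofReal (w x) from rfl,
      this, hwint1, ENNReal.ofReal_one]
  have hac : ν ≪ volume.restrict B := withDensity_absolutelyContinuous _ _
  have hνBc : ν Bᶜ = 0 := by
    refine hac ?_
    rw [Measure.restrict_apply hBmeas.compl]
    simp
  have haeB : ∀ᵐ x ∂ν, x ∈ B := ae_iff.2 (by exact hνBc)
  have haeBB : ∀ᵐ q : E3 × E3 ∂(ν.prod ν), q.1 ∈ B ∧ q.2 ∈ B := by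
    rw [ae_iff]
    refine measure_mono_null (fun q hq => ?_) (?_ : (ν.prod ν) ((Bᶜ ×ˢ univ) ∪ (univ ×ˢ Bᶜ)) = 0)
    · simp only [mem_setOf_eq, not_and_or] at hq
      rcases hq with h|h
      · exact Or.inl ⟨h, trivial⟩
      · exact Or.inr ⟨trivial, h⟩
    · refine measure_union_null ?_ ?_ <;>
        rw [Measure.prod_prod] <;> simp [hνBc]
  -- the segment integrals
  set T1 : E3 → E3 → ℝ := fun a b => ∫ t in Ioc (2⁻¹:ℝ) 1, G ((1-t) • a + t • b) with hT1def
  have hT1nn : ∀ a b, 0 ≤ T1 a b :=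
    fun a b => setIntegral_nonneg measurableSet_Ioc fun t _ => hGnn _
  -- differentiability inside the ball
  have hD' : ∀ z ∈ B, HasFDerivAt f (D z) z := by
    intro z hz
    have hnh : S ∈ nhds z := Filter.mem_of_superset (Metric.isOpen_ball.mem_nhds hz) hBS
    have h1 : DifferentiableWithinAt ℝ f S z := (hf.differentiableOn one_ne_zero) z (hBS hz)
    have h2 : DifferentiableAt ℝ f z := h1.differentiableAt hnh
    have h3 : D z = fderiv ℝ f z := by rw [hDdef]; exact fderivWithin_of_mem_nhds hnh
    rw [h3]; exact h2.hasFDerivAt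
  -- pointwise FTC + Jensen bound
  have hK : ∀ x ∈ B, ∀ y ∈ B,
      |f x - f y| ^ p ≤ (2*R) ^ p * (T1 y x + T1 x y) := by
    intro x hx y hy
    set γ : ℝ → E3 := fun t => (1-t) • x + t • y with hγdef
    have hγc : Continuous γ := by
      rw [hγdef]; fun_prop
    have hγB : ∀ t ∈ Icc (0:ℝ) 1, γ t ∈ B := fun t ht => hz_mem x hx y hy t ht
    have hγS : MapsTo γ (Icc (0:ℝ) 1) S := fun t ht => hBS (hγB t ht)
    have hγd : ∀ t : ℝ, HasDerivAt γ (y - x) t := by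
      intro t
      have h1 : HasDerivAt (fun s : ℝ => x + s • (y - x)) (y - x) t := by
        simpa using ((hasDerivAt_id t).smul_const (y - x)).const_add x
      have h2 : (fun s : ℝ => x + s • (y - x)) = γ := by
        funext s; rw [hγdef]; simp [smul_sub, sub_smul]; abel
      rwa [h2] at h1
    have hder : ∀ t ∈ uIcc (0:ℝ) 1, HasDerivAt (fun s => f (γ s)) ((D (γ t)) (y - x)) t := by
      intro t ht
      rw [uIcc_of_le zero_le_one] at ht
      exact (hD' (γ t) (hγB t ht)).comp_hasDerivAt t (hγd t)
    have hDγc : ContinuousOn (fun t => (D (γ t)) (y - x)) (uIcc (0:ℝ) 1) := by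
      rw [uIcc_of_le zero_le_one]
      exact (hDcont.comp hγc.continuousOn hγS).clm_apply continuousOn_const
    have hFTC := intervalIntegral.integral_eq_sub_of_hasDerivAt hder hDγc.intervalIntegrable
    have hγ0 : γ 0 = x := by rw [hγdef]; simp
    have hγ1 : γ 1 = y := by rw [hγdef]; simp
    have hxR : ‖x‖ < R := by simpa [hBdef, Metric.mem_ball, dist_eq_norm] using hx
    have hyR : ‖y‖ < R := by simpa [hBdef, Metric.mem_ball, dist_eq_norm] using hy
    have hyx : ‖y - x‖ ≤ 2 * R := by
      calc ‖y - x‖ ≤ ‖y‖ + ‖x‖ := norm_sub_le _ _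
        _ ≤ 2 * R := by linarith
    have hnormDcont : ContinuousOn (fun t => ‖D (γ t)‖) (Icc (0:ℝ) 1) :=
      (hDcont.comp hγc.continuousOn hγS).norm
    have hnormDcont' : ContinuousOn (fun t => 2 * R * ‖D (γ t)‖) (uIcc (0:ℝ) 1) := by
      rw [uIcc_of_le zero_le_one]
      exact continuousOn_const.mul hnormDcont
    have step1 : |f x - f y| ≤ ∫ t in (0:ℝ)..1, 2 * R * ‖D (γ t)‖ := by
      have h2 : |f x - f y| = |∫ t in (0:ℝ)..1, (D (γ t)) (y - x)| := by
        rw [hFTC, hγ0, hγ1, abs_sub_comm]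
      rw [h2]
      refine le_trans (intervalIntegral.abs_integral_le_integral_abs zero_le_one) ?_
      refine intervalIntegral.integral_mono_on zero_le_one
        (continuous_abs.comp_continuousOn hDγc).intervalIntegrable
        hnormDcont'.intervalIntegrable ?_
      intro t _
      calc |(D (γ t)) (y - x)| = ‖(D (γ t)) (y - x)‖ := (Real.norm_eq_abs _).symm
        _ ≤ ‖D (γ t)‖ * ‖y - x‖ := (D (γ t)).le_opNorm (y - x)
        _ ≤ ‖D (γ t)‖ * (2 * R) := mul_le_mul_of_nonneg_left hyx (norm_nonneg _)
        _ = 2 * R * ‖D (γ t)‖ := by ring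
    have hA0 : 0 ≤ ∫ t in (0:ℝ)..1, ‖D (γ t)‖ :=
      intervalIntegral.integral_nonneg zero_le_one fun t _ => norm_nonneg _
    have step2 : |f x - f y| ^ p ≤ (2*R) ^ p * (∫ t in (0:ℝ)..1, ‖D (γ t)‖) ^ p := by
      calc |f x - f y| ^ p ≤ (∫ t in (0:ℝ)..1, 2 * R * ‖D (γ t)‖) ^ p :=
            Real.rpow_le_rpow (abs_nonneg _) step1 hp0
        _ = ((2*R) * ∫ t in (0:ℝ)..1, ‖D (γ t)‖) ^ p := by
            rw [← intervalIntegral.integral_const_mul]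
        _ = (2*R) ^ p * (∫ t in (0:ℝ)..1, ‖D (γ t)‖) ^ p :=
            Real.mul_rpow (by linarith) hA0
    haveI : IsProbabilityMeasure (volume.restrict (Ioc (0:ℝ) 1)) := by
      constructor
      rw [Measure.restrict_apply_univ]
      simp [Real.volume_Ioc]
    have step3 : (∫ t in (0:ℝ)..1, ‖D (γ t)‖) ^ p ≤ ∫ t in Ioc (0:ℝ) 1, G (γ t) := by
      rw [intervalIntegral.integral_of_le zero_le_one]
      refine jensen_rpow (C := CD) _ hp
        ((hnormDcont.mono Ioc_subset_Icc_self).aestronglyMeasurable measurableSet_Ioc)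
        (Filter.Eventually.of_forall fun t => norm_nonneg _) ?_
      filter_upwards [ae_restrict_mem measurableSet_Ioc] with t ht
      exact hCD _ (hγS (Ioc_subset_Icc_self ht))
    have hGγcont : ContinuousOn (fun t => G (γ t)) (Icc (0:ℝ) 1) :=
      hGcont.comp hγc.continuousOn hγS
    have i1 : IntervalIntegrable (fun t => G (γ t)) volume 0 2⁻¹ := by
      refine (hGγcont.mono ?_).intervalIntegrable
      rw [uIcc_of_le (by norm_num : (0:ℝ) ≤ 2⁻¹)]
      exact Icc_subset_Icc le_rfl (by norm_num)
    have i2 : IntervalIntegrable (fun t => G (γ t)) volume 2⁻¹ 1 := by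
      refine (hGγcont.mono ?_).intervalIntegrable
      rw [uIcc_of_le (by norm_num : (2⁻¹:ℝ) ≤ 1)]
      exact Icc_subset_Icc (by norm_num) le_rfl
    have hsplit : (∫ t in Ioc (0:ℝ) 1, G (γ t)) = T1 y x + T1 x y := by
      rw [← intervalIntegral.integral_of_le zero_le_one,
        ← intervalIntegral.integral_add_adjacent_intervals i1 i2]
      congr 1
      · have hcong : ∀ t ∈ uIcc (0:ℝ) 2⁻¹,
            G (γ t) = (fun u => G ((1-u) • y + u • x)) (1 - t) := by
          intro t _
          simp only [hγdef]
          congr 1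
          simp [smul_sub, sub_smul, sub_sub_cancel]
          abel
        rw [intervalIntegral.integral_congr hcong,
          intervalIntegral.integral_comp_sub_left (fun u => G ((1-u) • y + u • x)) 1,
          show (1:ℝ) - 2⁻¹ = 2⁻¹ by norm_num, show (1:ℝ) - 0 = 1 by norm_num,
          intervalIntegral.integral_of_le (by norm_num : (2⁻¹:ℝ) ≤ 1), hT1def]
      · rw [intervalIntegral.integral_of_le (by norm_num : (2⁻¹:ℝ) ≤ 1), hT1def]
    calc |f x - f y| ^ p ≤ (2*R) ^ p * (∫ t in (0:ℝ)..1, ‖D (γ t)‖) ^ p := step2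
      _ ≤ (2*R) ^ p * (∫ t in Ioc (0:ℝ) 1, G (γ t)) :=
          mul_le_mul_of_nonneg_left step3 (Real.rpow_nonneg (by linarith) _)
      _ = (2*R) ^ p * (T1 y x + T1 x y) := by rw [hsplit]
  -- center of mass
  set c : ℝ := ∫ y in B, f y * w y with hcdef
  have hfaesmB : AEStronglyMeasurable f (volume.restrict B) :=
    (hfc.mono hBS).aestronglyMeasurable hBmeas
  have hfν : Integrable f ν := by
    refine Integrable.mono' (integrable_const M) (hfaesmB.mono_ac hac) ?_
    filter_upwards [haeB] with x hx
    exact hM x (hBS hx)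
  have hcν : (∫ y, f y ∂ν) = c := by
    rw [hconv, hcdef]
    exact setIntegral_congr_fun hBmeas fun y _ => mul_comm _ _
  -- a convenient bound for differences of f
  have hdiffb : ∀ x ∈ B, ∀ y ∈ B, |f x - f y| ≤ 2 * M := by
    intro x hx y hy
    have h1 : |f x| ≤ M := by rw [← Real.norm_eq_abs]; exact hM x (hBS hx)
    have h2 : |f y| ≤ M := by rw [← Real.norm_eq_abs]; exact hM y (hBS hy)
    have h3 : |f x - f y| ≤ |f x| + |f y| := by
      simpa [sub_eq_add_neg, abs_neg] using abs_add_le (f x) (-(f y))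
    linarith
  -- Jensen in the y variable
  have hJ : ∀ x ∈ B, |f x - c| ^ p ≤ ∫ y, |f x - f y| ^ p ∂ν := by
    intro x hx
    have habs : |f x - c| ≤ ∫ y, |f x - f y| ∂ν := by
      have h1 : (∫ y, (f x - f y) ∂ν) = f x - c := by
        rw [integral_sub (integrable_const _) hfν, integral_const, hcν]
        simp
      calc |f x - c| = |∫ y, (f x - f y) ∂ν| := by rw [h1]
        _ ≤ ∫ y, |f x - f y| ∂ν := by
            simpa [Real.norm_eq_abs] using
              norm_integral_le_integral_norm (μ := ν) (fun y => f x - f y)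
    have hmble : AEStronglyMeasurable (fun y => |f x - f y|) ν :=
      continuous_abs.comp_aestronglyMeasurable (aestronglyMeasurable_const.sub hfν.1)
    have hbd : ∀ᵐ y ∂ν, |f x - f y| ≤ 2 * M := by
      filter_upwards [haeB] with y hy
      exact hdiffb x hx y hy
    calc |f x - c| ^ p ≤ (∫ y, |f x - f y| ∂ν) ^ p :=
          Real.rpow_le_rpow (abs_nonneg _) habs hp0
      _ ≤ ∫ y, |f x - f y| ^ p ∂ν :=
          jensen_rpow ν hp hmble (Filter.Eventually.of_forall fun y => abs_nonneg _) hbd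
  -- measurability and integrability on the product
  have hKint : Integrable (fun q : E3 × E3 => |f q.1 - f q.2| ^ p) (ν.prod ν) := by
    have hcont : ContinuousOn (fun q : E3 × E3 => |f q.1 - f q.2| ^ p) (B ×ˢ B) := by
      apply (Real.continuous_rpow_const hp0).comp_continuousOn
      apply continuous_abs.comp_continuousOn
      exact (((hfc.mono hBS).comp continuousOn_fst fun q hq => hq.1).sub
        ((hfc.mono hBS).comp continuousOn_snd fun q hq => hq.2))
    have h1 : AEStronglyMeasurable (fun q : E3 × E3 => |f q.1 - f q.2| ^ p)
        ((volume.restrict B).prod (volume.restrict B)) := by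
      rw [Measure.prod_restrict]
      exact hcont.aestronglyMeasurable (hBmeas.prod hBmeas)
    refine Integrable.mono' (integrable_const ((2*M) ^ p))
      (h1.mono_ac (Measure.AbsolutelyContinuous.prod hac hac)) ?_
    filter_upwards [haeBB] with q hq
    rw [Real.norm_of_nonneg (Real.rpow_nonneg (abs_nonneg _) _)]
    exact Real.rpow_le_rpow (abs_nonneg _) (hdiffb q.1 hq.1 q.2 hq.2) hp0
  haveI hρfin : IsFiniteMeasure (volume.restrict (Ioc (2⁻¹:ℝ) 1)) := by
    constructor
    rw [Measure.restrict_apply_univ]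
    simp [Real.volume_Ioc]
  have hT1int : Integrable (fun q : E3 × E3 => T1 q.1 q.2) (ν.prod ν) := by
    have hFcont : ContinuousOn (fun q : (E3 × E3) × ℝ => G ((1 - q.2) • q.1.1 + q.2 • q.1.2))
        ((B ×ˢ B) ×ˢ Ioc (2⁻¹:ℝ) 1) := by
      apply hGcont.comp
      · fun_prop
      · intro q hq
        refine hBS (hz_mem _ hq.1.1 _ hq.1.2 _ ⟨?_, hq.2.2⟩)
        linarith [hq.2.1]
    have hFaesm : AEStronglyMeasurable
        (fun q : (E3 × E3) × ℝ => G ((1 - q.2) • q.1.1 + q.2 • q.1.2))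
        ((ν.prod ν).prod (volume.restrict (Ioc (2⁻¹:ℝ) 1))) := by
      have h1 : AEStronglyMeasurable
          (fun q : (E3 × E3) × ℝ => G ((1 - q.2) • q.1.1 + q.2 • q.1.2))
          (((volume.restrict B).prod (volume.restrict B)).prod
            (volume.restrict (Ioc (2⁻¹:ℝ) 1))) := by
        rw [Measure.prod_restrict, Measure.prod_restrict]
        exact hFcont.aestronglyMeasurable ((hBmeas.prod hBmeas).prod measurableSet_Ioc)
      exact h1.mono_ac (Measure.AbsolutelyContinuous.prod
        (Measure.AbsolutelyContinuous.prod hac hac) (Measure.AbsolutelyContinuous.rfl))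
    have hT1aesm : AEStronglyMeasurable (fun q : E3 × E3 => T1 q.1 q.2) (ν.prod ν) :=
      hFaesm.integral_prod_right'
    refine Integrable.mono' (integrable_const ((volume (Ioc (2⁻¹:ℝ) 1)).toReal * CD ^ p))
      hT1aesm ?_
    filter_upwards [haeBB] with q hq
    rw [Real.norm_of_nonneg (hT1nn _ _)]
    have hb : ∀ᵐ t ∂(volume.restrict (Ioc (2⁻¹:ℝ) 1)),
        G ((1-t) • q.1 + t • q.2) ≤ CD ^ p := by
      filter_upwards [ae_restrict_mem measurableSet_Ioc] with t ht
      refine hGbound _ (hBS (hz_mem _ hq.1 _ hq.2 _ ⟨?_, ht.2⟩))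
      linarith [ht.1]
    calc T1 q.1 q.2 ≤ ∫ _t in Ioc (2⁻¹:ℝ) 1, CD ^ p := by
          rw [hT1def]
          exact integral_mono_of_nonneg
            (Filter.Eventually.of_forall fun t => hGnn _) (integrable_const _) hb
      _ = (volume (Ioc (2⁻¹:ℝ) 1)).toReal * CD ^ p := by
          rw [setIntegral_const, smul_eq_mul, measureReal_def]
  have hT1sint : Integrable (fun q : E3 × E3 => T1 q.2 q.1) (ν.prod ν) := hT1int.swap
  -- the target quantity
  set J : ℝ := ∫ x in B, G x * w x with hJdef
  have hJnn : 0 ≤ J :=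
    setIntegral_nonneg hBmeas fun x _ => mul_nonneg (hGnn x) (hw_nonneg x)
  -- the truncated density G * w as a global integrable function
  set Hfun : E3 → ℝ := indicator B (fun z => G z * w z) with hHdef
  have hHnn : ∀ z, 0 ≤ Hfun z := by
    intro z
    by_cases h : z ∈ B
    · rw [hHdef, indicator_of_mem h]
      exact mul_nonneg (hGnn z) (hw_nonneg z)
    · rw [hHdef, indicator_of_notMem h]
  have hGWaesm : AEStronglyMeasurable (fun z => G z * w z) (volume.restrict B) :=
    ((hGcont.mono hBS).aestronglyMeasurable hBmeas).mul hw_meas.aestronglyMeasurable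
  have hHint : Integrable Hfun volume := by
    rw [hHdef, integrable_indicator_iff hBmeas]
    refine Integrable.mono' (integrable_const (CD ^ p * (R ^ 3)⁻¹)) hGWaesm ?_
    filter_upwards [ae_restrict_mem hBmeas] with z hz
    rw [Real.norm_of_nonneg (mul_nonneg (hGnn z) (hw_nonneg z))]
    exact mul_le_mul (hGbound z (hBS hz)) (hw_le z) (hw_nonneg z) (by positivity)
  have hIH : (∫ z, Hfun z) = J := by
    rw [hHdef, integral_indicator hBmeas, hJdef]
  -- change of variables estimate
  have hscale : ∀ t ∈ Ioc (2⁻¹:ℝ) 1, ∀ x ∈ B,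
      (∫ y in B, G ((1-t) • x + t • y) * w ((1-t) • x + t • y)) ≤ 8 * J := by
    intro t ht x hx
    have ht0 : (0:ℝ) < t := lt_trans (by norm_num) ht.1
    have heq : ∀ y ∈ B, G ((1-t) • x + t • y) * w ((1-t) • x + t • y)
        = Hfun (t • y + (1-t) • x) := by
      intro y hy
      have hz : ((1-t) • x + t • y) ∈ B := hz_mem x hx y hy t ⟨by linarith [ht.1], ht.2⟩
      rw [hHdef, show t • y + (1-t) • x = (1-t) • x + t • y from add_comm _ _,
        indicator_of_mem hz]
    have hint2 : Integrable (fun y => Hfun (t • y + (1-t) • x)) volume := by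
      have h1 : Integrable (fun z => Hfun (z + (1-t) • x)) volume := hHint.comp_add_right _
      exact h1.comp_smul ht0.ne'
    calc (∫ y in B, G ((1-t) • x + t • y) * w ((1-t) • x + t • y))
        = ∫ y in B, Hfun (t • y + (1-t) • x) := setIntegral_congr_fun hBmeas heq
      _ ≤ ∫ y, Hfun (t • y + (1-t) • x) :=
          setIntegral_le_integral hint2 (Filter.Eventually.of_forall fun y => hHnn _)
      _ = |((t:ℝ) ^ 3)⁻¹| * ∫ z, Hfun (z + (1-t) • x) := by
          have := MeasureTheory.Measure.integral_comp_smul (volume : Measure E3)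
            (fun z => Hfun (z + (1-t) • x)) t
          simpa [finrank_euclideanSpace_fin, smul_eq_mul] using this
      _ = (t ^ 3)⁻¹ * J := by
          rw [integral_add_right_eq_self (fun z => Hfun z) ((1-t) • x), hIH,
            abs_of_pos (by positivity)]
      _ ≤ 8 * J := by
          refine mul_le_mul_of_nonneg_right ?_ hJnn
          have h8 : (8:ℝ)⁻¹ ≤ t ^ 3 := by
            have h12 : (2⁻¹:ℝ) ≤ t := le_of_lt ht.1
            have hpow := pow_le_pow_left₀ (by norm_num : (0:ℝ) ≤ 2⁻¹) h12 3
            norm_num at hpow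
            linarith
          calc (t ^ 3)⁻¹ ≤ ((8:ℝ)⁻¹)⁻¹ := by
                exact inv_anti₀ (by norm_num) h8
            _ = 8 := by norm_num
  -- inner estimate using monotone rearrangement + change of variables
  have hInner : ∀ x ∈ B, w x * (∫ y, T1 x y ∂ν) ≤ 4 * ((R ^ 3)⁻¹ * J) := by
    intro x hx
    have hρ : (volume (Ioc (2⁻¹:ℝ) 1)).toReal = 2⁻¹ := by
      rw [Real.volume_Ioc]
      rw [ENNReal.toReal_ofReal (by norm_num)]
      norm_num
    set U : E3 → ℝ → ℝ := fun y t =>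
      (R ^ 3)⁻¹ * (G ((1-t) • x + t • y) * w ((1-t) • x + t • y)) with hUdef
    have hUnn : ∀ y t, 0 ≤ U y t := by
      intro y t
      rw [hUdef]
      exact mul_nonneg (by positivity) (mul_nonneg (hGnn _) (hw_nonneg _))
    have hUint : Integrable (Function.uncurry U)
        ((volume.restrict B).prod (volume.restrict (Ioc (2⁻¹:ℝ) 1))) := by
      have hGUcont : ContinuousOn (fun q : E3 × ℝ => G ((1 - q.2) • x + q.2 • q.1))
          (B ×ˢ Ioc (2⁻¹:ℝ) 1) := by
        apply hGcont.comp
        · fun_prop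
        · intro q hq
          refine hBS (hz_mem x hx _ hq.1 _ ⟨?_, hq.2.2⟩)
          linarith [hq.2.1]
      have hwU : Measurable (fun q : E3 × ℝ => w ((1 - q.2) • x + q.2 • q.1)) := by
        apply hw_meas.comp
        fun_prop
      have hUaesm : AEStronglyMeasurable (Function.uncurry U)
          ((volume.restrict B).prod (volume.restrict (Ioc (2⁻¹:ℝ) 1))) := by
        rw [Measure.prod_restrict]
        refine AEStronglyMeasurable.const_mul ?_ _
        exact (hGUcont.aestronglyMeasurable (hBmeas.prod measurableSet_Ioc)).mul
          hwU.aestronglyMeasurable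
      refine Integrable.mono' (integrable_const ((R ^ 3)⁻¹ * (CD ^ p * (R ^ 3)⁻¹)))
        hUaesm ?_
      have haemem : ∀ᵐ q : E3 × ℝ
          ∂((volume.restrict B).prod (volume.restrict (Ioc (2⁻¹:ℝ) 1))),
          q.1 ∈ B ∧ q.2 ∈ Ioc (2⁻¹:ℝ) 1 := by
        rw [Measure.prod_restrict]
        filter_upwards [ae_restrict_mem (hBmeas.prod measurableSet_Ioc)] with q hq
        exact hq
      filter_upwards [haemem] with q hq
      rw [Function.uncurry, Real.norm_of_nonneg (hUnn _ _), hUdef]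
      refine mul_le_mul_of_nonneg_left ?_ (by positivity)
      refine mul_le_mul (hGbound _ (hBS (hz_mem x hx _ hq.1 _ ⟨?_, hq.2.2⟩)))
        (hw_le _) (hw_nonneg _) (by positivity)
      linarith [hq.2.1]
    have h1 : w x * (∫ y, T1 x y ∂ν) = ∫ y in B, w x * (w y * T1 x y) := by
      rw [hconv (fun y => T1 x y), ← integral_const_mul]
    have h2 : ∀ y ∈ B, w x * (w y * T1 x y) ≤ ∫ t in Ioc (2⁻¹:ℝ) 1, U y t := by
      intro y hy
      have he : w x * (w y * T1 x y)
          = ∫ t in Ioc (2⁻¹:ℝ) 1, (w x * w y) * G ((1-t) • x + t • y) := by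
        rw [hT1def, integral_const_mul]
        ring
      rw [he]
      have hGycont : ContinuousOn (fun t => G ((1-t) • x + t • y)) (Icc (0:ℝ) 1) := by
        apply hGcont.comp
        · fun_prop
        · intro t ht
          exact hBS (hz_mem x hx y hy t ht)
      have hUyint : Integrable (fun t => U y t) (volume.restrict (Ioc (2⁻¹:ℝ) 1)) := by
        refine Integrable.mono' (integrable_const ((R ^ 3)⁻¹ * (CD ^ p * (R ^ 3)⁻¹))) ?_ ?_
        · rw [hUdef]
          refine AEStronglyMeasurable.const_mul ?_ _
          refine AEStronglyMeasurable.mul ?_ ?_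
          · exact ((hGycont.mono (fun t ht => ⟨le_trans (by norm_num) ht.1.le, ht.2⟩ :
              Ioc (2⁻¹:ℝ) 1 ⊆ Icc (0:ℝ) 1)).aestronglyMeasurable measurableSet_Ioc)
          · exact (hw_meas.comp (by fun_prop : Measurable fun t : ℝ =>
              (1-t) • x + t • y)).aestronglyMeasurable
        · filter_upwards [ae_restrict_mem measurableSet_Ioc] with t ht
          rw [Real.norm_of_nonneg (hUnn _ _), hUdef]
          refine mul_le_mul_of_nonneg_left ?_ (by positivity)
          refine mul_le_mul (hGbound _ (hBS (hz_mem x hx y hy t ⟨?_, ht.2⟩)))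
            (hw_le _) (hw_nonneg _) (by positivity)
          linarith [ht.1]
      refine integral_mono_of_nonneg
        (Filter.Eventually.of_forall fun t => mul_nonneg
          (mul_nonneg (hw_nonneg x) (hw_nonneg y)) (hGnn _)) hUyint ?_
      filter_upwards [ae_restrict_mem measurableSet_Ioc] with t ht
      have hwz' := hwz x hx y hy t ⟨by linarith [ht.1], ht.2⟩
      rw [hUdef]
      calc (w x * w y) * G ((1-t) • x + t • y)
          ≤ ((R ^ 3)⁻¹ * w ((1-t) • x + t • y)) * G ((1-t) • x + t • y) :=
            mul_le_mul_of_nonneg_right hwz' (hGnn _)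
        _ = (R ^ 3)⁻¹ * (G ((1-t) • x + t • y) * w ((1-t) • x + t • y)) := by ring
    have h3 : (∫ y in B, w x * (w y * T1 x y))
        ≤ ∫ y in B, (∫ t in Ioc (2⁻¹:ℝ) 1, U y t) := by
      refine integral_mono_of_nonneg
        (Filter.Eventually.of_forall fun y => mul_nonneg (hw_nonneg x)
          (mul_nonneg (hw_nonneg y) (hT1nn x y)))
        hUint.integral_prod_left ?_
      filter_upwards [ae_restrict_mem hBmeas] with y hy
      exact h2 y hy
    have h4 : (∫ y in B, (∫ t in Ioc (2⁻¹:ℝ) 1, U y t))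
        = ∫ t in Ioc (2⁻¹:ℝ) 1, (∫ y in B, U y t) := integral_integral_swap hUint
    have h5 : (∫ t in Ioc (2⁻¹:ℝ) 1, (∫ y in B, U y t))
        ≤ ∫ _t in Ioc (2⁻¹:ℝ) 1, ((R ^ 3)⁻¹ * (8 * J)) := by
      refine integral_mono_of_nonneg
        (Filter.Eventually.of_forall fun t => integral_nonneg fun y => hUnn y t)
        (integrable_const _) ?_
      filter_upwards [ae_restrict_mem measurableSet_Ioc] with t ht
      have hs := hscale t ht x hx
      calc (∫ y in B, U y t)
          = (R ^ 3)⁻¹ * ∫ y in B, G ((1-t) • x + t • y) * w ((1-t) • x + t • y) := by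
            rw [hUdef, integral_const_mul]
        _ ≤ (R ^ 3)⁻¹ * (8 * J) := mul_le_mul_of_nonneg_left hs (by positivity)
    have h6 : (∫ _t in Ioc (2⁻¹:ℝ) 1, ((R ^ 3)⁻¹ * (8 * J))) = 4 * ((R ^ 3)⁻¹ * J) := by
      rw [setIntegral_const, measureReal_def, hρ, smul_eq_mul]
      ring
    calc w x * (∫ y, T1 x y ∂ν) = ∫ y in B, w x * (w y * T1 x y) := h1
      _ ≤ ∫ y in B, (∫ t in Ioc (2⁻¹:ℝ) 1, U y t) := h3
      _ = ∫ t in Ioc (2⁻¹:ℝ) 1, (∫ y in B, U y t) := h4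
      _ ≤ ∫ _t in Ioc (2⁻¹:ℝ) 1, ((R ^ 3)⁻¹ * (8 * J)) := h5
      _ = 4 * ((R ^ 3)⁻¹ * J) := h6
  -- volume of the ball is at most the cube
  have hvol : (volume B).toReal ≤ 8 * R ^ 3 := by
    have hcoord : ∀ (x : E3) (i : Fin 3), |x i| ≤ ‖x‖ := by
      intro x i
      have h2 : ‖x i‖ ^ 2 ≤ ∑ j, ‖x j‖ ^ 2 :=
        Finset.single_le_sum (f := fun j => ‖x j‖ ^ 2) (fun j _ => sq_nonneg _)
          (Finset.mem_univ i)
      have h1 : ‖x i‖ ≤ ‖x‖ := by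
        rw [EuclideanSpace.norm_eq]
        calc ‖x i‖ = Real.sqrt (‖x i‖ ^ 2) := (Real.sqrt_sq (norm_nonneg _)).symm
          _ ≤ Real.sqrt (∑ j, ‖x j‖ ^ 2) := Real.sqrt_le_sqrt h2
      simpa using h1
    have hle : volume B ≤ ENNReal.ofReal (2*R) ^ 3 := by
      have hsub : B ⊆ (MeasurableEquiv.toLp 2 (Fin 3 → ℝ)).symm ⁻¹'
          (univ.pi fun _ : Fin 3 => Icc (-R) R) := by
        intro x hx
        have hx' : ‖x‖ < R := by simpa [hBdef, Metric.mem_ball, dist_eq_norm] using hx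
        have hmem : ∀ i : Fin 3, x i ∈ Icc (-R) R := by
          intro i
          exact abs_le.1 ((hcoord x i).trans hx'.le)
        intro i _
        exact hmem i
      refine le_trans (measure_mono hsub) ?_
      rw [(EuclideanSpace.volume_preserving_symm_measurableEquiv_toLp (Fin 3)).measure_preimage
        (MeasurableSet.univ_pi fun _ => measurableSet_Icc).nullMeasurableSet]
      rw [volume_pi_pi]
      simp only [Real.volume_Icc, Finset.prod_const, Finset.card_univ, Fintype.card_fin]
      rw [show R - (-R) = 2*R by ring]
    have h2R : (0:ℝ) ≤ 2*R := by linarith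
    calc (volume B).toReal ≤ (ENNReal.ofReal (2*R) ^ 3).toReal := by
          refine ENNReal.toReal_mono ?_ hle
          exact ENNReal.pow_ne_top ENNReal.ofReal_ne_top
      _ = (2*R) ^ 3 := by
          rw [ENNReal.toReal_pow, ENNReal.toReal_ofReal h2R]
      _ = 8 * R ^ 3 := by ring
  -- now the main chain
  have hgoalL : (∫ x in B,
      |f x - ∫ y in B, f y * ((R ^ 3)⁻¹ * lam (‖y‖ / R))| ^ p * ((R ^ 3)⁻¹ * lam (‖x‖ / R)))
      = ∫ x, |f x - c| ^ p ∂ν := by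
    have hc' : (∫ y in B, f y * ((R ^ 3)⁻¹ * lam (‖y‖ / R))) = c := by
      rw [hcdef]
      exact setIntegral_congr_fun hBmeas fun y hy => by rw [hw_eq y hy]
    rw [hconv]
    refine setIntegral_congr_fun hBmeas fun x hx => ?_
    rw [hc', hw_eq x hx, mul_comm]
  have hgoalR : (∫ x in B, ‖D x‖ ^ p * ((R ^ 3)⁻¹ * lam (‖x‖ / R))) = J := by
    rw [hJdef]
    exact setIntegral_congr_fun hBmeas fun x hx => by rw [hw_eq x hx]
  rw [hgoalL, hgoalR]
  have step1 : (∫ x, |f x - c| ^ p ∂ν) ≤ ∫ x, (∫ y, |f x - f y| ^ p ∂ν) ∂ν := by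
    refine integral_mono_of_nonneg
      (Filter.Eventually.of_forall fun x => Real.rpow_nonneg (abs_nonneg _) _)
      hKint.integral_prod_left ?_
    filter_upwards [haeB] with x hx
    exact hJ x hx
  have step2 : (∫ x, (∫ y, |f x - f y| ^ p ∂ν) ∂ν)
      = ∫ q, |f q.1 - f q.2| ^ p ∂(ν.prod ν) := (integral_prod _ hKint).symm
  have step3 : (∫ q, |f q.1 - f q.2| ^ p ∂(ν.prod ν))
      ≤ ∫ q, (2*R) ^ p * (T1 q.2 q.1 + T1 q.1 q.2) ∂(ν.prod ν) := by
    refine integral_mono_of_nonneg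
      (Filter.Eventually.of_forall fun q => Real.rpow_nonneg (abs_nonneg _) _)
      ((hT1sint.add hT1int).const_mul _) ?_
    filter_upwards [haeBB] with q hq
    exact hK q.1 hq.1 q.2 hq.2
  have hswap : (∫ q, T1 q.2 q.1 ∂(ν.prod ν)) = ∫ q, T1 q.1 q.2 ∂(ν.prod ν) := by
    simpa using integral_prod_swap (fun q : E3 × E3 => T1 q.1 q.2) (μ := ν) (ν := ν)
  have step4 : (∫ q, (2*R) ^ p * (T1 q.2 q.1 + T1 q.1 q.2) ∂(ν.prod ν))
      = (2*R) ^ p * (2 * (∫ x, (∫ y, T1 x y ∂ν) ∂ν)) := by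
    rw [integral_const_mul, integral_add hT1sint hT1int, hswap, ← integral_prod _ hT1int]
    ring
  have step5 : (∫ x, (∫ y, T1 x y ∂ν) ∂ν) ≤ (volume B).toReal * (4 * ((R ^ 3)⁻¹ * J)) := by
    rw [hconv]
    calc (∫ x in B, w x * (∫ y, T1 x y ∂ν))
        ≤ ∫ _x in B, 4 * ((R ^ 3)⁻¹ * J) := by
          refine integral_mono_of_nonneg
            (Filter.Eventually.of_forall fun x => mul_nonneg (hw_nonneg x)
              (integral_nonneg fun y => hT1nn x y))
            (integrable_const _) ?_
          filter_upwards [ae_restrict_mem hBmeas] with x hx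
          exact hInner x hx
      _ = (volume B).toReal * (4 * ((R ^ 3)⁻¹ * J)) := by
          rw [setIntegral_const, smul_eq_mul, measureReal_def]
  have hfinal : (2*R) ^ p * (2 * ((volume B).toReal * (4 * ((R ^ 3)⁻¹ * J))))
      ≤ 2 ^ (p + 6) * R ^ p * J := by
    have h2R : (0:ℝ) ≤ (2*R) ^ p := Real.rpow_nonneg (by linarith) _
    have e1 : ((2:ℝ)*R) ^ p = 2 ^ p * R ^ p := Real.mul_rpow (by norm_num) hR.le
    have e2 : (2:ℝ) ^ (p + 6) = 2 ^ p * 64 := by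
      have h6 : ((2:ℝ) ^ (6:ℝ)) = 64 := by
        rw [show (6:ℝ) = ((6:ℕ):ℝ) by norm_num, Real.rpow_natCast]; norm_num
      rw [Real.rpow_add (by norm_num : (0:ℝ) < 2), h6]
    have hbound : (volume B).toReal * (4 * ((R ^ 3)⁻¹ * J)) ≤ 32 * J := by
      calc (volume B).toReal * (4 * ((R ^ 3)⁻¹ * J)) ≤ (8 * R ^ 3) * (4 * ((R ^ 3)⁻¹ * J)) := by
            refine mul_le_mul_of_nonneg_right hvol ?_
            positivity
        _ = 32 * ((R ^ 3) * (R ^ 3)⁻¹) * J := by ring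
        _ = 32 * J := by rw [mul_inv_cancel₀ hR3.ne']; ring
    calc (2*R) ^ p * (2 * ((volume B).toReal * (4 * ((R ^ 3)⁻¹ * J))))
        ≤ (2*R) ^ p * (2 * (32 * J)) := by
          refine mul_le_mul_of_nonneg_left ?_ h2R
          linarith
      _ = 2 ^ p * 64 * R ^ p * J := by rw [e1]; ring
      _ = 2 ^ (p + 6) * R ^ p * J := by rw [e2]
  calc (∫ x, |f x - c| ^ p ∂ν)
      ≤ ∫ x, (∫ y, |f x - f y| ^ p ∂ν) ∂ν := step1
    _ = ∫ q, |f q.1 - f q.2| ^ p ∂(ν.prod ν) := step2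
    _ ≤ ∫ q, (2*R) ^ p * (T1 q.2 q.1 + T1 q.1 q.2) ∂(ν.prod ν) := step3
    _ = (2*R) ^ p * (2 * (∫ x, (∫ y, T1 x y ∂ν) ∂ν)) := step4
    _ ≤ (2*R) ^ p * (2 * ((volume B).toReal * (4 * ((R ^ 3)⁻¹ * J)))) := by
        refine mul_le_mul_of_nonneg_left ?_ (Real.rpow_nonneg (by linarith) _)
        linarith [step5]
    _ ≤ 2 ^ (p + 6) * R ^ p * J := hfinal
end
end
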